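/- Let k ≥ 2 be an integer, λ ∈ ℂ*, and let h(ζ) = Σ_{m>0} a_m ζ^m define a holomorphic function on the unit disc vanishing at 0 (the positive part of a Laurent series convergent on the punctured disc). Then the series χ(ζ) := Σ_{l=0}^∞ λ^{-(l+1)} h(ζ^{k^l}) converges uniformly on compact subsets of the open unit disc and defines a holomorphic function satisfying λχ(ζ) − χ(ζ^k) = h(ζ) for all ζ in the unit disc. -/

import Mathlib

open Metric Filter

lemma chi_aux (h : ℂ → ℂ) (hh : DifferentiableOn ℂ h (Metric.ball (0:ℂ) 1)) (h0 : h 0 = 0)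
    (lam : ℂ) (k : ℕ) (hk : 2 ≤ k) (r : ℝ) (hr0 : 0 ≤ r) (hr1 : r < 1) :
    ∃ u : ℕ → ℝ, Summable u ∧ ∀ (l : ℕ) (ζ : ℂ), ‖ζ‖ ≤ r →
      ‖lam⁻¹ ^ (l + 1) * h (ζ ^ k ^ l)‖ ≤ u l := by
  set R : ℝ := (r + 1) / 2 with hR
  have hrR : r < R := by rw [hR]; linarith
  have hR0 : 0 < R := by rw [hR]; linarith
  have hR1 : R < 1 := by rw [hR]; linarith
  have hsub : closedBall (0:ℂ) R ⊆ ball (0:ℂ) 1 := closedBall_subset_ball hR1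
  obtain ⟨M, hM⟩ := (isCompact_closedBall (0:ℂ) R).exists_bound_of_continuousOn
    (hh.continuousOn.mono hsub)
  have hM0 : 0 ≤ M := by
    have := hM 0 (mem_closedBall_self hR0.le)
    simpa [h0] using this
  have hmaps : Set.MapsTo h (ball (0:ℂ) R) (ball (h 0) (M + 1)) := by
    intro z hz
    have := hM z (ball_subset_closedBall hz)
    simp only [mem_ball, h0, dist_eq_norm, sub_zero]
    linarith
  have schwarz : ∀ z ∈ ball (0:ℂ) R, ‖h z‖ ≤ (M + 1) / R * ‖z‖ := by
    intro z hz
    have := Complex.dist_le_div_mul_dist_of_mapsTo_ball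
      (hh.mono (ball_subset_ball hR1.le)) (hmaps.mono_right ball_subset_closedBall) hz
    simpa [h0, dist_eq_norm] using this
  set C : ℝ := (M + 1) / R with hC
  have hC0 : 0 ≤ C := div_nonneg (by linarith) hR0.le
  set A : ℝ := ‖lam⁻¹‖ with hA
  have hA0 : 0 ≤ A := norm_nonneg _
  refine ⟨fun l => C * (A ^ (l + 1) * r ^ k ^ l), ?_, ?_⟩
  · apply Summable.mul_left
    set v : ℕ → ℝ := fun l => A ^ (l + 1) * r ^ k ^ l with hv
    have hv0 : ∀ l, 0 ≤ v l := fun l =>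
      mul_nonneg (pow_nonneg hA0 _) (pow_nonneg hr0 _)
    have key : ∀ l, v (l + 1) ≤ (A * r ^ 2 ^ l) * v l := by
      intro l
      have h1 : (r ^ k ^ l) ^ k ≤ (r ^ k ^ l) ^ 2 :=
        pow_le_pow_of_le_one (pow_nonneg hr0 _) (pow_le_one₀ hr0 hr1.le) hk
      have h2 : r ^ k ^ l ≤ r ^ 2 ^ l :=
        pow_le_pow_of_le_one hr0 hr1.le (Nat.pow_le_pow_left hk l)
      have h3 : r ^ k ^ (l + 1) = (r ^ k ^ l) ^ k := by
        rw [← pow_mul, ← pow_succ]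
      calc v (l + 1) = A * A ^ (l + 1) * (r ^ k ^ l) ^ k := by
            simp only [hv]; rw [h3]; ring
        _ ≤ A * A ^ (l + 1) * (r ^ k ^ l) ^ 2 := by
            apply mul_le_mul_of_nonneg_left h1
            exact mul_nonneg hA0 (pow_nonneg hA0 _)
        _ = (A * (r ^ k ^ l)) * v l := by simp only [hv]; ring
        _ ≤ (A * r ^ 2 ^ l) * v l := by
            apply mul_le_mul_of_nonneg_right _ (hv0 l)
            exact mul_le_mul_of_nonneg_left h2 hA0
    have tend : Tendsto (fun l : ℕ => A * r ^ 2 ^ l) atTop (nhds 0) := by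
      have t1 : Tendsto (fun n : ℕ => r ^ n) atTop (nhds 0) :=
        tendsto_pow_atTop_nhds_zero_of_lt_one hr0 hr1
      have t2 : Tendsto (fun l : ℕ => (2:ℕ) ^ l) atTop atTop :=
        tendsto_pow_atTop_atTop_of_one_lt one_lt_two
      have := (t1.comp t2).const_mul A
      simpa using this
    have ev : ∀ᶠ l in atTop, A * r ^ 2 ^ l ≤ 1 / 2 := by
      filter_upwards [tend.eventually_lt_const (by norm_num : (0:ℝ) < 1/2)] with l hl
      exact hl.le
    refine summable_of_ratio_norm_eventually_le (by norm_num : (1:ℝ)/2 < 1) ?_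
    filter_upwards [ev] with l hl
    rw [Real.norm_of_nonneg (hv0 _), Real.norm_of_nonneg (hv0 _)]
    exact (key l).trans (mul_le_mul_of_nonneg_right hl (hv0 l))
  · intro l ζ hζ
    have hle : ‖ζ ^ k ^ l‖ ≤ r ^ k ^ l := by
      rw [norm_pow]; exact pow_le_pow_left₀ (norm_nonneg _) hζ _
    have hball : ζ ^ k ^ l ∈ ball (0:ℂ) R := by
      rw [mem_ball_zero_iff]
      have : r ^ k ^ l ≤ r := pow_le_of_le_one hr0 hr1.le (Nat.pos_of_ne_zero (by positivity)).ne'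
      calc ‖ζ ^ k ^ l‖ ≤ r ^ k ^ l := hle
        _ ≤ r := this
        _ < R := hrR
    have hb := schwarz _ hball
    calc ‖lam⁻¹ ^ (l + 1) * h (ζ ^ k ^ l)‖ = A ^ (l + 1) * ‖h (ζ ^ k ^ l)‖ := by
          rw [norm_mul, norm_pow]
      _ ≤ A ^ (l + 1) * (C * ‖ζ ^ k ^ l‖) :=
          mul_le_mul_of_nonneg_left hb (pow_nonneg hA0 _)
      _ ≤ A ^ (l + 1) * (C * r ^ k ^ l) := by
          apply mul_le_mul_of_nonneg_left _ (pow_nonneg hA0 _)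
          exact mul_le_mul_of_nonneg_left hle hC0
      _ = C * (A ^ (l + 1) * r ^ k ^ l) := by ring

/-- Functional-equation lemma (Section 4): for `k ≥ 2`, `λ ≠ 0` and `h` holomorphic on the
unit disc with `h(0) = 0`, the series `χ(ζ) = Σ_{l≥0} λ^{-(l+1)} h(ζ^{k^l})` converges
uniformly on compact subsets of the unit disc, defines a holomorphic function there, and
satisfies `λ χ(ζ) − χ(ζ^k) = h(ζ)` for all `ζ` in the unit disc. -/
theorem chi_series_converges_and_solves (k : ℕ) (hk : 2 ≤ k) (lam : ℂ) (hlam : lam ≠ 0)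
    (h : ℂ → ℂ) (hh : DifferentiableOn ℂ h (Metric.ball (0:ℂ) 1)) (h0 : h 0 = 0) :
    (∀ K : Set ℂ, K ⊆ Metric.ball (0:ℂ) 1 → IsCompact K →
      TendstoUniformlyOn
        (fun n ζ => ∑ l ∈ Finset.range n, lam⁻¹ ^ (l + 1) * h (ζ ^ k ^ l))
        (fun ζ => ∑' l : ℕ, lam⁻¹ ^ (l + 1) * h (ζ ^ k ^ l)) Filter.atTop K) ∧
    (∀ ζ ∈ Metric.ball (0:ℂ) 1,
      lam * (∑' l : ℕ, lam⁻¹ ^ (l + 1) * h (ζ ^ k ^ l))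
        - (∑' l : ℕ, lam⁻¹ ^ (l + 1) * h ((ζ ^ k) ^ k ^ l)) = h ζ) ∧
    DifferentiableOn ℂ (fun ζ => ∑' l : ℕ, lam⁻¹ ^ (l + 1) * h (ζ ^ k ^ l))
      (Metric.ball (0:ℂ) 1) := by
  have part1 : ∀ K : Set ℂ, K ⊆ Metric.ball (0:ℂ) 1 → IsCompact K →
      TendstoUniformlyOn
        (fun n ζ => ∑ l ∈ Finset.range n, lam⁻¹ ^ (l + 1) * h (ζ ^ k ^ l))
        (fun ζ => ∑' l : ℕ, lam⁻¹ ^ (l + 1) * h (ζ ^ k ^ l)) Filter.atTop K := by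
    intro K hK hKc
    have hr : ∃ r : ℝ, 0 ≤ r ∧ r < 1 ∧ ∀ ζ ∈ K, ‖ζ‖ ≤ r := by
      rcases K.eq_empty_or_nonempty with rfl | hne
      · exact ⟨0, le_refl _, one_pos, by simp⟩
      · obtain ⟨x, hxK, hx⟩ := hKc.exists_isMaxOn hne (continuous_norm.continuousOn)
        refine ⟨‖x‖, norm_nonneg _, ?_, fun ζ hζ => hx hζ⟩
        simpa [mem_ball, dist_eq_norm] using hK hxK
    obtain ⟨r, hr0, hr1, hKr⟩ := hr
    obtain ⟨u, hu, hub⟩ := chi_aux h hh h0 lam k hk r hr0 hr1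
    exact tendstoUniformlyOn_tsum_nat hu (fun l ζ hζ => hub l ζ (hKr ζ hζ))
  refine ⟨part1, ?_, ?_⟩
  · intro ζ hζ
    have hζ1 : ‖ζ‖ < 1 := by simpa [mem_ball, dist_eq_norm] using hζ
    obtain ⟨u, hu, hub⟩ := chi_aux h hh h0 lam k hk ‖ζ‖ (norm_nonneg _) hζ1
    set f : ℕ → ℂ := fun l => lam⁻¹ ^ (l + 1) * h (ζ ^ k ^ l) with hf
    have hfs : Summable f := Summable.of_norm_bounded hu (fun l => hub l ζ le_rfl)
    have hgf : ∀ l : ℕ, lam⁻¹ ^ (l + 1) * h ((ζ ^ k) ^ k ^ l) = lam * f (l + 1) := by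
      intro l
      have hp : (ζ ^ k) ^ k ^ l = ζ ^ k ^ (l + 1) := by
        rw [← pow_mul, ← pow_succ']
      rw [hp, hf]
      simp only []
      rw [pow_succ lam⁻¹ (l + 1)]
      field_simp
    have ht : (∑' l : ℕ, lam⁻¹ ^ (l + 1) * h ((ζ ^ k) ^ k ^ l))
        = lam * ∑' l : ℕ, f (l + 1) := by
      rw [← tsum_mul_left]
      exact tsum_congr hgf
    rw [ht, Summable.tsum_eq_zero_add hfs, mul_add, add_sub_cancel_right]
    have : f 0 = lam⁻¹ * h ζ := by simp [hf]
    rw [this, ← mul_assoc, mul_inv_cancel₀ hlam, one_mul]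
  · have hopen : IsOpen (Metric.ball (0:ℂ) 1) := isOpen_ball
    have hloc : TendstoLocallyUniformlyOn
        (fun n ζ => ∑ l ∈ Finset.range n, lam⁻¹ ^ (l + 1) * h (ζ ^ k ^ l))
        (fun ζ => ∑' l : ℕ, lam⁻¹ ^ (l + 1) * h (ζ ^ k ^ l)) Filter.atTop
        (Metric.ball (0:ℂ) 1) := by
      rw [tendstoLocallyUniformlyOn_iff_forall_isCompact hopen]
      exact fun K hK hKc => part1 K hK hKc
    apply hloc.differentiableOn _ hopen
    filter_upwards with n
    apply DifferentiableOn.fun_sum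
    intro l _
    apply DifferentiableOn.const_mul
    apply hh.comp (differentiableOn_id.pow _)
    intro z hz
    rw [mem_ball_zero_iff] at hz ⊢
    show ‖z ^ k ^ l‖ < 1
    rw [norm_pow]
    exact pow_lt_one₀ (norm_nonneg _) hz (by positivity)
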